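/- Let P_i = ∑_{j ≠ i} M(e_i − e_j) − 2Iₙ for i = 1,…,n+1, where M(v) = vvᵀ and A_n is regarded as a rank-n root system. Then ∑_{i=1}^{n+1} P_i = 0 and P_1, …, P_n are linearly independent; hence the span of {P_1,…,P_{n+1}} has dimension n. -/
import Mathlib


open Matrix
open scoped Classical

/-- The root system `Aₙ = {±(eᵢ − eⱼ) : i ≠ j} ⊆ ℝ^{n+1}`. -/
noncomputable def ARoots (n : ℕ) : Finset (Fin (n + 1) → ℝ) :=
  Finset.image (fun p : Fin (n + 1) × Fin (n + 1) =>
      Pi.single p.1 (1 : ℝ) - Pi.single p.2 1)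
    (Finset.univ.filter fun p => p.1 ≠ p.2)

/-- Orthogonal projection of `ℝ^{n+1}` onto the hyperplane `{v : ∑ vᵢ = 0}`
(the identity on the span of the root system `Aₙ`). -/
noncomputable def projA (n : ℕ) : Matrix (Fin (n + 1)) (Fin (n + 1)) ℝ :=
  1 - ((n : ℝ) + 1)⁻¹ • Matrix.of fun _ _ => (1 : ℝ)

/-- `Pᵢ = ∑_{j ≠ i} (eᵢ − eⱼ)(eᵢ − eⱼ)ᵀ − 2·Iₙ`, where `Iₙ` is the identity on
the span of `Aₙ`. -/
noncomputable def PA (n : ℕ) (i : Fin (n + 1)) : Matrix (Fin (n + 1)) (Fin (n + 1)) ℝ :=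
  (∑ j ∈ Finset.univ.erase i,
      Matrix.vecMulVec (Pi.single i 1 - Pi.single j 1) (Pi.single i 1 - Pi.single j 1))
    - (2 : ℝ) • projA n

lemma PA_apply (n : ℕ) (i a b : Fin (n+1)) :
    PA n i a b = (if a = i then (if b = i then (n:ℝ) else -1)
        else if b = i then -1 else if a = b then 1 else 0)
      - 2 * (if a = b then 1 else 0) + 2 * ((n:ℝ)+1)⁻¹ := by
  have hsum : (∑ j ∈ Finset.univ.erase i,
      Matrix.vecMulVec (Pi.single i 1 - Pi.single j 1) (Pi.single i 1 - Pi.single j 1)) a b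
      = (if a = i then (if b = i then (n:ℝ) else -1)
        else if b = i then -1 else if a = b then 1 else 0) := by
    rw [Matrix.sum_apply]
    simp only [vecMulVec_apply, Pi.sub_apply, Pi.single_apply]
    rcases eq_or_ne a i with ha | ha <;> rcases eq_or_ne b i with hb | hb
    · subst ha hb
      rw [Finset.sum_congr rfl (g := fun _ => (1:ℝ))
        (fun j hj => by simp [Ne.symm (Finset.ne_of_mem_erase hj)]),
        Finset.sum_const, Finset.card_erase_of_mem (Finset.mem_univ _)]
      simp
    · subst ha
      rw [Finset.sum_congr rfl (g := fun j => -(if b = j then (1:ℝ) else 0))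
        (fun j hj => by
          rcases eq_or_ne b j with h | h <;>
            simp [h, Finset.ne_of_mem_erase hj, Ne.symm (Finset.ne_of_mem_erase hj), hb]),
        Finset.sum_neg_distrib, Finset.sum_ite_eq]
      simp [hb, Finset.mem_erase.mpr ⟨hb, Finset.mem_univ b⟩]
    · subst hb
      rw [Finset.sum_congr rfl (g := fun j => -(if a = j then (1:ℝ) else 0))
        (fun j hj => by
          rcases eq_or_ne a j with h | h <;>
            simp [h, Finset.ne_of_mem_erase hj, Ne.symm (Finset.ne_of_mem_erase hj), ha]),
        Finset.sum_neg_distrib, Finset.sum_ite_eq]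
      simp [ha, Finset.mem_erase.mpr ⟨ha, Finset.mem_univ a⟩]
    · rw [Finset.sum_congr rfl (g := fun j => if a = j then (if a = b then (1:ℝ) else 0) else 0)
        (fun j hj => by
          rcases eq_or_ne a j with h | h
          · rcases eq_or_ne a b with h2 | h2
            · simp [← h, hb, h2]
            · simp [← h, hb, h2, Ne.symm h2]
          · simp [h, ha, hb]),
        Finset.sum_ite_eq]
      simp [ha, hb, Finset.mem_erase.mpr ⟨ha, Finset.mem_univ a⟩]
  rw [PA, Matrix.sub_apply, hsum, Matrix.smul_apply, projA, Matrix.sub_apply,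
    Matrix.smul_apply, Matrix.one_apply]
  simp only [Matrix.of_apply, smul_eq_mul, mul_one]
  ring

theorem PA_sum_zero_and_linearIndependent {n : ℕ} (hn : 2 ≤ n) :
    (∑ i, PA n i = 0) ∧
      LinearIndependent ℝ (fun i : Fin n => PA n i.castSucc) ∧
      Module.finrank ℝ (Submodule.span ℝ (Set.range (PA n))) = n := by
  have hne : ((n:ℝ)+1) ≠ 0 := by positivity
  have hn2 : (2:ℝ) ≤ (n:ℝ) := by exact_mod_cast hn
  have hc : ∀ j : Fin n, (Fin.castSucc j) ≠ Fin.last n := fun j => (Fin.castSucc_lt_last j).ne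
  -- part 1 : sum zero
  have hsum0 : ∑ i, PA n i = 0 := by
    ext a b
    rw [Matrix.sum_apply]
    rcases eq_or_ne a b with rfl | h
    · rw [Finset.sum_congr rfl (g := fun i => (if a = i then ((n:ℝ)-1) else 0)
          + (-1 + 2*((n:ℝ)+1)⁻¹)) (fun i _ => by
        rw [PA_apply]
        rcases eq_or_ne a i with rfl | hai
        · simp; ring
        · simp [hai]; ring),
        Finset.sum_add_distrib, Finset.sum_ite_eq, Finset.sum_const]
      simp only [Finset.mem_univ, if_true, Finset.card_univ, Fintype.card_fin,
        nsmul_eq_mul, Matrix.zero_apply, Nat.cast_add, Nat.cast_one]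
      field_simp
      ring
    · rw [Finset.sum_congr rfl (g := fun i => (if a = i then (-1:ℝ) else 0)
          + (if b = i then (-1:ℝ) else 0) + 2*((n:ℝ)+1)⁻¹) (fun i _ => by
        rw [PA_apply]
        rcases eq_or_ne a i with rfl | hai
        · simp [Ne.symm h, h]
        · rcases eq_or_ne b i with rfl | hbi
          · simp [hai, h]
          · simp [hai, hbi, h]),
        Finset.sum_add_distrib, Finset.sum_add_distrib, Finset.sum_ite_eq,
        Finset.sum_ite_eq, Finset.sum_const]
      simp only [Finset.mem_univ, if_true, Finset.card_univ, Fintype.card_fin,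
        nsmul_eq_mul, Matrix.zero_apply, Nat.cast_add, Nat.cast_one]
      field_simp
      ring
  -- key : coefficients vanish
  have key : ∀ g : Fin n → ℝ, (∑ i, g i • PA n i.castSucc) = 0 → ∀ i, g i = 0 := by
    intro g hg
    have hs : ∑ j, g j = 0 := by
      have h1 : (∑ i, g i • PA n i.castSucc) (Fin.last n) (Fin.last n)
          = (0 : Matrix (Fin (n+1)) (Fin (n+1)) ℝ) (Fin.last n) (Fin.last n) := by rw [hg]
      rw [Matrix.zero_apply, Matrix.sum_apply] at h1
      rw [Finset.sum_congr rfl (g := fun j => g j * (-1 + 2*((n:ℝ)+1)⁻¹)) (fun j _ => by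
        rw [Matrix.smul_apply, PA_apply, smul_eq_mul]
        simp only [if_neg (Ne.symm (hc j)), eq_self_iff_true, if_true]
        ring), ← Finset.sum_mul] at h1
      have hcne : (-1 + 2*((n:ℝ)+1)⁻¹) ≠ 0 := by
        intro hz
        rw [add_eq_zero_iff_eq_neg] at hz
        field_simp at hz
        linarith
      exact (mul_eq_zero.mp h1).resolve_right hcne
    intro i
    have h2 : (∑ i, g i • PA n i.castSucc) i.castSucc (Fin.last n)
        = (0 : Matrix (Fin (n+1)) (Fin (n+1)) ℝ) i.castSucc (Fin.last n) := by rw [hg]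
    rw [Matrix.zero_apply, Matrix.sum_apply] at h2
    rw [Finset.sum_congr rfl (g := fun j => (if i = j then -g j else 0)
        + g j * (2*((n:ℝ)+1)⁻¹)) (fun j _ => by
      rw [Matrix.smul_apply, PA_apply, smul_eq_mul]
      rcases eq_or_ne i j with rfl | hij
      · simp only [if_neg (Ne.symm (hc i)), if_neg (hc i), eq_self_iff_true, if_true]; ring
      · simp only [if_neg (fun hh => hij (Fin.castSucc_inj.mp hh)), if_neg (Ne.symm (hc j)),
          if_neg (hc i), if_neg hij]
        ring),
      Finset.sum_add_distrib, Finset.sum_ite_eq, ← Finset.sum_mul, hs] at h2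
    simpa using h2
  have hli : LinearIndependent ℝ (fun i : Fin n => PA n i.castSucc) := by
    rw [Fintype.linearIndependent_iff]
    exact key
  refine ⟨hsum0, hli, ?_⟩
  have hspan : Submodule.span ℝ (Set.range (PA n))
      = Submodule.span ℝ (Set.range (fun i : Fin n => PA n i.castSucc)) := by
    apply le_antisymm
    · rw [Submodule.span_le]
      rintro _ ⟨i, rfl⟩
      rcases eq_or_ne i (Fin.last n) with rfl | h
      · have hlast : PA n (Fin.last n) = -∑ i : Fin n, PA n i.castSucc := by
          have h0 := hsum0
          rw [Fin.sum_univ_castSucc] at h0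
          linear_combination (norm := abel) h0
        rw [hlast]
        exact Submodule.neg_mem _ (Submodule.sum_mem _ fun i _ =>
          Submodule.subset_span ⟨i, rfl⟩)
      · exact Submodule.subset_span ⟨i.castPred h, by simp⟩
    · apply Submodule.span_mono
      rintro _ ⟨i, rfl⟩
      exact ⟨i.castSucc, rfl⟩
  rw [hspan, finrank_span_eq_card hli, Fintype.card_fin]
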